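/- For all a, b, z ∈ ℂ and ρ ∈ ℝ, the double series Σ_{(m,n)∈ℕ×ℕ} (a^m b^n / (m! n!)) · J_{m,n}(z,ρ) converges absolutely (is summable over ℕ × ℕ) and its sum equals exp(a·z + b·conj(z) − a·b·ρ). -/

import Mathlib

open MeasureTheory ProbabilityTheory Complex Finset

/-- Itô's complex Hermite polynomial `J_{m,n}(z, ρ)`. -/
noncomputable def complexHermite (m n : ℕ) (z : ℂ) (ρ : ℝ) : ℂ :=
  ∑ k ∈ Finset.range (min m n + 1),
    (-1 : ℂ) ^ k * (Nat.factorial k : ℂ) * (Nat.choose m k : ℂ) * (Nat.choose n k : ℂ) *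
      (ρ : ℂ) ^ k * z ^ (m - k) * (starRingEnd ℂ z) ^ (n - k)

private lemma ch_term_eq (a b z : ℂ) (ρ : ℝ) {m n k : ℕ} (hm : k ≤ m) (hn : k ≤ n) :
    (a * z) ^ (m - k) / ((m - k).factorial : ℂ) *
      ((b * (starRingEnd ℂ z)) ^ (n - k) / ((n - k).factorial : ℂ)) *
      ((-(a * b * (ρ : ℂ))) ^ k / (k.factorial : ℂ)) =
    a ^ m * b ^ n / ((Nat.factorial m : ℂ) * (Nat.factorial n : ℂ)) *
      ((-1 : ℂ) ^ k * (Nat.factorial k : ℂ) * (Nat.choose m k : ℂ) * (Nat.choose n k : ℂ) *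
        (ρ : ℂ) ^ k * z ^ (m - k) * (starRingEnd ℂ z) ^ (n - k)) := by
  have ha : a ^ m = a ^ (m - k) * a ^ k := by rw [← pow_add, Nat.sub_add_cancel hm]
  have hb : b ^ n = b ^ (n - k) * b ^ k := by rw [← pow_add, Nat.sub_add_cancel hn]
  have hmk : ((m - k).factorial : ℂ) ≠ 0 := Nat.cast_ne_zero.mpr (Nat.factorial_ne_zero _)
  have hnk : ((n - k).factorial : ℂ) ≠ 0 := Nat.cast_ne_zero.mpr (Nat.factorial_ne_zero _)
  have hk : (k.factorial : ℂ) ≠ 0 := Nat.cast_ne_zero.mpr (Nat.factorial_ne_zero _)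
  have hmf : ((m).factorial : ℂ) ≠ 0 := Nat.cast_ne_zero.mpr (Nat.factorial_ne_zero _)
  have hnf : ((n).factorial : ℂ) ≠ 0 := Nat.cast_ne_zero.mpr (Nat.factorial_ne_zero _)
  rw [Nat.cast_choose ℂ hm, Nat.cast_choose ℂ hn, ha, hb, mul_pow, mul_pow, neg_pow,
    mul_pow, mul_pow]
  field_simp

set_option maxHeartbeats 1000000 in
theorem complexHermite_generating_function (a b z : ℂ) (ρ : ℝ) :
    Summable (fun p : ℕ × ℕ =>
      a ^ p.1 * b ^ p.2 / ((Nat.factorial p.1 : ℂ) * (Nat.factorial p.2 : ℂ)) *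
        complexHermite p.1 p.2 z ρ) ∧
    ∑' p : ℕ × ℕ,
      a ^ p.1 * b ^ p.2 / ((Nat.factorial p.1 : ℂ) * (Nat.factorial p.2 : ℂ)) *
        complexHermite p.1 p.2 z ρ
      = Complex.exp (a * z + b * (starRingEnd ℂ z) - a * b * (ρ : ℂ)) := by
  have key : ∀ x : ℂ, Summable (fun n : ℕ => ‖x ^ n / (n.factorial : ℂ)‖) := fun x => by
    simpa [norm_div, norm_pow] using Real.summable_pow_div_factorial ‖x‖
  have expsum : ∀ x : ℂ, HasSum (fun n : ℕ => x ^ n / (n.factorial : ℂ)) (Complex.exp x) :=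
    fun x => by
      rw [Complex.exp_eq_exp_ℂ, NormedSpace.exp_eq_tsum_div]
      exact (NormedSpace.expSeries_div_summable x).hasSum
  set A := a * z with hA
  set B := b * (starRingEnd ℂ z) with hB
  set C := -(a * b * (ρ : ℂ)) with hC
  set T : (ℕ × ℕ) × ℕ → ℂ := fun p =>
    A ^ p.1.1 / (p.1.1.factorial : ℂ) * (B ^ p.1.2 / (p.1.2.factorial : ℂ)) *
      (C ^ p.2 / (p.2.factorial : ℂ)) with hT
  -- norm summability for the pair part
  have hpairnorm : Summable (fun q : ℕ × ℕ =>
      ‖A ^ q.1 / (q.1.factorial : ℂ) * (B ^ q.2 / (q.2.factorial : ℂ))‖) := by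
    simpa [norm_mul] using
      (key A).mul_of_nonneg (key B) (fun _ => norm_nonneg _) (fun _ => norm_nonneg _)
  have sT : Summable T := by
    rw [hT]
    exact summable_mul_of_summable_norm
      (f := fun q : ℕ × ℕ => A ^ q.1 / (q.1.factorial : ℂ) * (B ^ q.2 / (q.2.factorial : ℂ)))
      (g := fun k : ℕ => C ^ k / (k.factorial : ℂ)) hpairnorm (key C)
  have hTval : ∑' p, T p = Complex.exp A * Complex.exp B * Complex.exp C := by
    rw [hT, ← (expsum A).tsum_eq, ← (expsum B).tsum_eq, ← (expsum C).tsum_eq,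
      tsum_mul_tsum_of_summable_norm (key A) (key B),
      tsum_mul_tsum_of_summable_norm hpairnorm (key C)]
  have hTsum : HasSum T (Complex.exp A * Complex.exp B * Complex.exp C) :=
    hTval ▸ sT.hasSum
  -- reindex via the injection ((i,j),k) ↦ ((i+k, j+k), k)
  set e : (ℕ × ℕ) × ℕ → (ℕ × ℕ) × ℕ := fun p => ((p.1.1 + p.2, p.1.2 + p.2), p.2) with he'
  have he : Function.Injective e := by
    rintro ⟨⟨i, j⟩, k⟩ ⟨⟨i', j'⟩, k'⟩ h
    rw [he'] at h
    simp only [Prod.mk.injEq] at h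
    obtain ⟨⟨h1, h2⟩, h3⟩ := h
    subst h3
    have hi : i = i' := by omega
    have hj : j = j' := by omega
    rw [hi, hj]
  set G : (ℕ × ℕ) × ℕ → ℂ := fun q =>
    if q.2 ≤ q.1.1 ∧ q.2 ≤ q.1.2 then T ((q.1.1 - q.2, q.1.2 - q.2), q.2) else 0 with hG'
  have hGe : ∀ p, G (e p) = T p := by
    rintro ⟨⟨i, j⟩, k⟩
    simp [hG', he', hT]
  have hG0 : ∀ q ∉ Set.range e, G q = 0 := by
    rintro ⟨⟨m, n⟩, k⟩ hq
    by_cases h : k ≤ m ∧ k ≤ n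
    · refine absurd ⟨((m - k, n - k), k), ?_⟩ hq
      rw [he']
      show ((m - k + k, n - k + k), k) = ((m, n), k)
      rw [Nat.sub_add_cancel h.1, Nat.sub_add_cancel h.2]
    · simp [hG', h]
  have hGsum : HasSum G (Complex.exp A * Complex.exp B * Complex.exp C) := by
    refine (he.hasSum_iff hG0).1 ?_
    rw [show G ∘ e = T from funext hGe]
    exact hTsum
  -- fiberwise sums
  have hfiber : ∀ mn : ℕ × ℕ, HasSum (fun k => G (mn, k))
      (a ^ mn.1 * b ^ mn.2 / ((Nat.factorial mn.1 : ℂ) * (Nat.factorial mn.2 : ℂ)) *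
        complexHermite mn.1 mn.2 z ρ) := by
    rintro ⟨m, n⟩
    have h0 : ∀ k ∉ Finset.range (min m n + 1), G ((m, n), k) = 0 := by
      intro k hk
      simp only [Finset.mem_range] at hk
      have : ¬(k ≤ m ∧ k ≤ n) := by omega
      simp [hG', this]
    have hsum := hasSum_sum_of_ne_finset_zero (L := SummationFilter.unconditional ℕ) h0
    convert hsum using 1
    rw [complexHermite, Finset.mul_sum]
    refine Finset.sum_congr rfl fun k hk => ?_
    simp only [Finset.mem_range] at hk
    have hm : k ≤ m := by omega
    have hn : k ≤ n := by omega
    rw [hG']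
    simp only [hm, hn, and_self, if_true]
    exact (ch_term_eq a b z ρ hm hn).symm
  have hH := hGsum.prod_fiberwise hfiber
  refine ⟨hH.summable, ?_⟩
  rw [hH.tsum_eq, ← Complex.exp_add, ← Complex.exp_add]
  congr 1
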